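/- Let G be a triangle-free simple graph with maximum degree at most 4 containing a 5-cycle x–y–z–u–v–x on five distinct vertices, where y, z, u have degree exactly 3, x and v have degree exactly 4, and the third neighbors y₁ of y and u₁ of u off the cycle are distinct vertices, each of degree exactly 4 and not on the cycle. Set S = {x, y, z, u, v}. If the S-reduced graph G*S admits a 2-PCF 9-coloring, then G admits a 2-PCF 9-coloring. (This shows a vertex-minimum counterexample has no 5-cycle with three consecutive 3-vertices.) -/

import Mathlib

open Finset

section PCFHelpers
variable {V : Type*}

/-- number of elements of `A` colored `c` -/
def pcfCnt (ψ : V → Fin 9) (A : Finset V) (c : Fin 9) : ℕ :=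
  (A.filter fun a => ψ a = c).card

/-- number of colors appearing exactly once on `A` -/
def pcfUc (ψ : V → Fin 9) (A : Finset V) : ℕ :=
  (Finset.univ.filter fun c : Fin 9 => pcfCnt ψ A c = 1).card

lemma pcfCnt_congr {ψ ψ' : V → Fin 9} {A : Finset V} (h : ∀ a ∈ A, ψ a = ψ' a) (c : Fin 9) :
    pcfCnt ψ A c = pcfCnt ψ' A c := by
  unfold pcfCnt
  congr 1
  exact Finset.filter_congr (fun a ha => by rw [h a ha])

lemma pcfUc_congr {ψ ψ' : V → Fin 9} {A : Finset V} (h : ∀ a ∈ A, ψ a = ψ' a) :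
    pcfUc ψ A = pcfUc ψ' A := by
  unfold pcfUc
  congr 1
  exact Finset.filter_congr (fun c _ => by rw [pcfCnt_congr h])

lemma pcfCnt_insert [DecidableEq V] (ψ : V → Fin 9) {A : Finset V} {s : V} (hs : s ∉ A)
    (c : Fin 9) :
    pcfCnt ψ (insert s A) c = (if ψ s = c then 1 else 0) + pcfCnt ψ A c := by
  unfold pcfCnt
  rw [Finset.filter_insert]
  split_ifs with h
  · rw [Finset.card_insert_of_notMem (fun hmem => hs (Finset.mem_of_mem_filter _ hmem))]
    omega
  · omega

lemma pcfCnt_singleton (ψ : V → Fin 9) (a : V) (c : Fin 9) :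
    pcfCnt ψ {a} c = if ψ a = c then 1 else 0 := by
  unfold pcfCnt
  rw [Finset.filter_singleton]
  split_ifs <;> simp

lemma two_le_pcfUc {ψ : V → Fin 9} {A : Finset V} {c₁ c₂ : Fin 9} (h : c₁ ≠ c₂)
    (h1 : pcfCnt ψ A c₁ = 1) (h2 : pcfCnt ψ A c₂ = 1) : 2 ≤ pcfUc ψ A := by
  have hsub : ({c₁, c₂} : Finset (Fin 9)) ⊆
      Finset.univ.filter fun c : Fin 9 => pcfCnt ψ A c = 1 := by
    intro c hc
    simp only [Finset.mem_insert, Finset.mem_singleton] at hc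
    rcases hc with rfl | rfl <;> simp [h1, h2]
  calc 2 = ({c₁, c₂} : Finset (Fin 9)).card := (Finset.card_pair h).symm
    _ ≤ _ := Finset.card_le_card hsub

lemma pcfUc_insert_ge [DecidableEq V] (ψ : V → Fin 9) {A : Finset V} {s : V} (hs : s ∉ A) :
    pcfUc ψ A ≤ pcfUc ψ (insert s A) + 1 := by
  have key : (Finset.univ.filter fun c : Fin 9 => pcfCnt ψ A c = 1).erase (ψ s) ⊆
      Finset.univ.filter fun c : Fin 9 => pcfCnt ψ (insert s A) c = 1 := by
    intro c hc
    rw [Finset.mem_erase] at hc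
    obtain ⟨hne, hc⟩ := hc
    rw [Finset.mem_filter] at hc ⊢
    refine ⟨Finset.mem_univ _, ?_⟩
    rw [pcfCnt_insert ψ hs, if_neg (fun hh => hne hh.symm)]
    omega
  have h1 := Finset.card_le_card key
  have h3 := Finset.pred_card_le_card_erase (a := ψ s)
      (s := Finset.univ.filter fun c : Fin 9 => pcfCnt ψ A c = 1)
  unfold pcfUc
  omega

lemma pcfUc_erase_ge [DecidableEq V] (ψ : V → Fin 9) {A : Finset V} {q : V} :
    pcfUc ψ A ≤ pcfUc ψ (A.erase q) + 1 := by
  have key : (Finset.univ.filter fun c : Fin 9 => pcfCnt ψ A c = 1).erase (ψ q) ⊆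
      Finset.univ.filter fun c : Fin 9 => pcfCnt ψ (A.erase q) c = 1 := by
    intro c hc
    rw [Finset.mem_erase] at hc
    obtain ⟨hne, hc⟩ := hc
    rw [Finset.mem_filter] at hc ⊢
    refine ⟨Finset.mem_univ _, ?_⟩
    have : (A.erase q).filter (fun a => ψ a = c) = (A.filter fun a => ψ a = c).erase q := by
      rw [Finset.filter_erase]
    rw [pcfCnt, this, Finset.erase_eq_of_notMem ?_]
    · exact hc.2
    · intro hq
      exact hne (Finset.mem_filter.mp hq).2.symm
  have h1 := Finset.card_le_card key
  have h3 := Finset.pred_card_le_card_erase (a := ψ q)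
      (s := Finset.univ.filter fun c : Fin 9 => pcfCnt ψ A c = 1)
  unfold pcfUc
  omega

lemma pcfUc_insert_fresh [DecidableEq V] (ψ : V → Fin 9) {A : Finset V} {s : V} (hs : s ∉ A)
    (hfresh : ∀ a ∈ A, ψ a ≠ ψ s) :
    pcfUc ψ A + 1 ≤ pcfUc ψ (insert s A) := by
  have hcnt0 : pcfCnt ψ A (ψ s) = 0 := by
    unfold pcfCnt
    rw [Finset.card_eq_zero, Finset.filter_eq_empty_iff]
    exact fun {a} ha => hfresh a ha
  have key : insert (ψ s) (Finset.univ.filter fun c : Fin 9 => pcfCnt ψ A c = 1) ⊆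
      Finset.univ.filter fun c : Fin 9 => pcfCnt ψ (insert s A) c = 1 := by
    intro c hc
    rw [Finset.mem_insert] at hc
    rw [Finset.mem_filter]
    refine ⟨Finset.mem_univ _, ?_⟩
    rcases hc with rfl | hc
    · rw [pcfCnt_insert ψ hs, if_pos rfl, hcnt0]
    · rw [Finset.mem_filter] at hc
      have hne : ψ s ≠ c := by
        rintro rfl
        rw [hcnt0] at hc
        omega
      rw [pcfCnt_insert ψ hs, if_neg hne]
      omega
  have h1 := Finset.card_le_card key
  have h2 : ψ s ∉ (Finset.univ.filter fun c : Fin 9 => pcfCnt ψ A c = 1) := by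
    simp [hcnt0]
  rw [Finset.card_insert_of_notMem h2] at h1
  unfold pcfUc
  omega

lemma card_le_pcfUc_of_inj [DecidableEq V] (ψ : V → Fin 9) {A : Finset V}
    (hinj : ∀ a ∈ A, ∀ b ∈ A, ψ a = ψ b → a = b) : A.card ≤ pcfUc ψ A := by
  have key : A.image ψ ⊆ Finset.univ.filter fun c : Fin 9 => pcfCnt ψ A c = 1 := by
    intro c hc
    rw [Finset.mem_image] at hc
    obtain ⟨a, ha, rfl⟩ := hc
    rw [Finset.mem_filter]
    refine ⟨Finset.mem_univ _, ?_⟩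
    unfold pcfCnt
    rw [Finset.card_eq_one]
    exact ⟨a, by
      ext b
      simp only [Finset.mem_filter, Finset.mem_singleton]
      constructor
      · rintro ⟨hb, hψ⟩; exact hinj b hb a ha hψ
      · rintro rfl; exact ⟨ha, rfl⟩⟩
  have h1 := Finset.card_le_card key
  rw [Finset.card_image_of_injOn (fun a ha b hb => hinj a ha b hb)] at h1
  exact h1

lemma three_le_image (ψ : V → Fin 9) {A : Finset V} (hA : A.card = 3) (h2 : 2 ≤ pcfUc ψ A) :
    3 ≤ (A.image ψ).card := by
  by_contra hlt
  push_neg at hlt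
  obtain ⟨c₁, hc₁, c₂, hc₂, hne⟩ := Finset.one_lt_card.mp (by unfold pcfUc at h2; omega :
    1 < (Finset.univ.filter fun c : Fin 9 => pcfCnt ψ A c = 1).card)
  rw [Finset.mem_filter] at hc₁ hc₂
  have hmem : ∀ c : Fin 9, pcfCnt ψ A c = 1 → c ∈ A.image ψ := by
    intro c hc
    unfold pcfCnt at hc
    have : (A.filter fun a => ψ a = c).Nonempty := by
      rw [← Finset.card_pos, hc]; omega
    obtain ⟨a, ha⟩ := this
    rw [Finset.mem_filter] at ha
    exact Finset.mem_image.mpr ⟨a, ha.1, ha.2⟩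
  have hsub : ({c₁, c₂} : Finset (Fin 9)) ⊆ A.image ψ := by
    intro c hc
    simp only [Finset.mem_insert, Finset.mem_singleton] at hc
    rcases hc with rfl | rfl
    · exact hmem _ hc₁.2
    · exact hmem _ hc₂.2
  have heq : ({c₁, c₂} : Finset (Fin 9)) = A.image ψ :=
    Finset.eq_of_subset_of_card_le hsub (by rw [Finset.card_pair hne]; omega)
  have hsum : A.card = ∑ b ∈ A.image ψ, (A.filter fun a => ψ a = b).card :=
    Finset.card_eq_sum_card_image ψ A
  rw [← heq, Finset.sum_pair hne] at hsum
  have e1 : (A.filter fun a => ψ a = c₁).card = 1 := hc₁.2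
  have e2 : (A.filter fun a => ψ a = c₂).card = 1 := hc₂.2
  rw [e1, e2, hA] at hsum
  omega

/-- Extension lemma for a boundary vertex with one neighbor in S. -/
lemma pcf_extend_one [DecidableEq V] (ψ ψ' : V → Fin 9) (M Q : Finset V) (s : V)
    (hagree : ∀ a ∈ M ∪ Q, ψ' a = ψ a)
    (hQ : Q.card ≤ 1) (hdisj : ∀ q ∈ Q, q ∉ M) (hM : M.card ≤ 3) (hs : s ∉ M)
    (hyp : min 2 (M ∪ Q).card ≤ pcfUc ψ (M ∪ Q))
    (hc : (∀ a ∈ M, ψ a ≠ ψ' s) ∨ 3 ≤ (M.image ψ).card) :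
    min 2 (M.card + 1) ≤ pcfUc ψ' (insert s M) := by
  have hagreeM : ∀ a ∈ M, ψ' a = ψ a := fun a ha => hagree a (Finset.mem_union_left _ ha)
  have hucM : pcfUc ψ' M = pcfUc ψ M := pcfUc_congr hagreeM
  rcases hc with hfresh | hrb
  · have hkey : pcfUc ψ' M + 1 ≤ pcfUc ψ' (insert s M) :=
      pcfUc_insert_fresh ψ' hs (fun a ha => by rw [hagreeM a ha]; exact hfresh a ha)
    have hlow : 1 ≤ pcfUc ψ M ∨ M = ∅ := by
      by_cases hMe : M = ∅
      · exact Or.inr hMe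
      · left
        have hMpos : 1 ≤ M.card := Finset.card_pos.mpr (Finset.nonempty_of_ne_empty hMe)
        interval_cases hQc : Q.card
        · have hQe : Q = ∅ := Finset.card_eq_zero.mp hQc
          rw [hQe, Finset.union_empty] at hyp
          omega
        · obtain ⟨q, rfl⟩ := Finset.card_eq_one.mp hQc
          have hq : q ∉ M := hdisj q (Finset.mem_singleton_self q)
          have : M ∪ {q} = insert q M := by
            rw [Finset.union_comm, ← Finset.insert_eq]
          rw [this] at hyp
          have herase := pcfUc_erase_ge ψ (A := insert q M) (q := q)
          rw [Finset.erase_insert hq] at herase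
          have hcard : (insert q M).card = M.card + 1 := Finset.card_insert_of_notMem hq
          rw [hcard] at hyp
          have : min 2 (M.card + 1) = 2 := by omega
          omega
    rcases hlow with h1 | rfl
    · omega
    · have hone : pcfCnt ψ' {s} (ψ' s) = 1 := by rw [pcfCnt_singleton, if_pos rfl]
      have : 1 ≤ pcfUc ψ' {s} := by
        apply Finset.card_pos.mpr
        exact ⟨ψ' s, Finset.mem_filter.mpr ⟨Finset.mem_univ _, hone⟩⟩
      simpa using this
  · have h3 : M.card = 3 := by
      have := Finset.card_image_le (s := M) (f := ψ)
      omega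
    have hinj : ∀ a ∈ M, ∀ b ∈ M, ψ a = ψ b → a = b := by
      have hiff := Finset.card_image_iff (s := M) (f := ψ)
      have : (M.image ψ).card = M.card := by
        have := Finset.card_image_le (s := M) (f := ψ)
        omega
      intro a ha b hb hab
      exact (hiff.mp this) ha hb hab
    have hge := card_le_pcfUc_of_inj ψ hinj
    have hge' : 3 ≤ pcfUc ψ' M := by rw [hucM]; omega
    have := pcfUc_insert_ge ψ' (A := M) hs
    have hmin : min 2 (M.card + 1) = 2 := by omega
    omega

/-- Extension for a boundary vertex with two neighbors in S whose colors are fresh & distinct. -/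
lemma pcf_extend_two [DecidableEq V] (ψ ψ' : V → Fin 9) (M : Finset V) (s t : V)
    (hst : s ≠ t) (hsM : s ∉ M) (htM : t ∉ M)
    (hagree : ∀ a ∈ M, ψ' a = ψ a)
    (h1 : ∀ a ∈ M, ψ a ≠ ψ' s) (h2 : ∀ a ∈ M, ψ a ≠ ψ' t) (hne : ψ' s ≠ ψ' t) :
    2 ≤ pcfUc ψ' (insert s (insert t M)) := by
  have step1 : pcfUc ψ' M + 1 ≤ pcfUc ψ' (insert t M) :=
    pcfUc_insert_fresh ψ' htM (fun a ha => by rw [hagree a ha]; exact h2 a ha)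
  have hs2 : s ∉ insert t M := by
    simp only [Finset.mem_insert]
    rintro (rfl | hmem)
    · exact hst rfl
    · exact hsM hmem
  have step2 : pcfUc ψ' (insert t M) + 1 ≤ pcfUc ψ' (insert s (insert t M)) := by
    apply pcfUc_insert_fresh ψ' hs2
    intro a ha
    rw [Finset.mem_insert] at ha
    rcases ha with rfl | ha
    · exact fun hh => hne hh.symm
    · rw [hagree a ha]; exact h1 a ha
  omega

/-- uniqueness count for a triple with pairwise distinct colors -/
lemma pcf_triple [DecidableEq V] (ψ : V → Fin 9) (a b c : V)
    (hab : a ≠ b) (hac : a ≠ c) (hbc : b ≠ c)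
    (cab : ψ a ≠ ψ b) (cac : ψ a ≠ ψ c) (cbc : ψ b ≠ ψ c) :
    2 ≤ pcfUc ψ {a, b, c} := by
  have hbm : b ∉ ({c} : Finset V) := by simp [hbc]
  have ham : a ∉ ({b, c} : Finset V) := by simp [hab, hac]
  have hcnt : ∀ d, pcfCnt ψ {a,b,c} d =
      (if ψ a = d then 1 else 0) + ((if ψ b = d then 1 else 0) + (if ψ c = d then 1 else 0)) := by
    intro d
    rw [show ({a,b,c} : Finset V) = insert a (insert b {c}) from rfl,
      pcfCnt_insert ψ ham, pcfCnt_insert ψ hbm, pcfCnt_singleton]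
  apply two_le_pcfUc cab
  · rw [hcnt]; split_ifs <;> simp_all
  · rw [hcnt]; split_ifs <;> simp_all

/-- uniqueness count for a quadruple -/
lemma pcf_quad [DecidableEq V] (ψ : V → Fin 9) (s t m₁ m₂ : V)
    (h1 : s ≠ t) (h2 : s ≠ m₁) (h3 : s ≠ m₂) (h4 : t ≠ m₁) (h5 : t ≠ m₂) (h6 : m₁ ≠ m₂)
    (hab : ψ m₁ ≠ ψ m₂)
    (hcond : (ψ s ≠ ψ m₁ ∧ ψ s ≠ ψ m₂) ∨ (ψ t ≠ ψ m₁ ∧ ψ t ≠ ψ m₂)) :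
    2 ≤ pcfUc ψ {s, t, m₁, m₂} := by
  have e3 : m₁ ∉ ({m₂} : Finset V) := by simp [h6]
  have e2 : t ∉ ({m₁, m₂} : Finset V) := by simp [h4, h5]
  have e1 : s ∉ ({t, m₁, m₂} : Finset V) := by simp [h1, h2, h3]
  have hcnt : ∀ d, pcfCnt ψ {s,t,m₁,m₂} d =
      (if ψ s = d then 1 else 0) + ((if ψ t = d then 1 else 0) +
      ((if ψ m₁ = d then 1 else 0) + (if ψ m₂ = d then 1 else 0))) := by
    intro d
    rw [show ({s,t,m₁,m₂} : Finset V) = insert s (insert t (insert m₁ {m₂})) from rfl,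
      pcfCnt_insert ψ e1, pcfCnt_insert ψ e2, pcfCnt_insert ψ e3, pcfCnt_singleton]
  rcases hcond with ⟨hs1, hs2⟩ | ⟨ht1, ht2⟩
  · by_cases hts : ψ t = ψ s
    · apply two_le_pcfUc hab
      · rw [hcnt]; split_ifs <;> simp_all
      · rw [hcnt]; split_ifs <;> simp_all
    · by_cases htm1 : ψ t = ψ m₁
      · apply two_le_pcfUc (show ψ s ≠ ψ m₂ from hs2)
        · rw [hcnt]; split_ifs <;> simp_all
        · rw [hcnt]; split_ifs <;> simp_all
      · apply two_le_pcfUc (show ψ s ≠ ψ m₁ from hs1)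
        · rw [hcnt]; split_ifs <;> simp_all
        · rw [hcnt]; split_ifs <;> simp_all
  · by_cases hts : ψ s = ψ t
    · apply two_le_pcfUc hab
      · rw [hcnt]; split_ifs <;> simp_all
      · rw [hcnt]; split_ifs <;> simp_all
    · by_cases hsm1 : ψ s = ψ m₁
      · apply two_le_pcfUc (show ψ t ≠ ψ m₂ from ht2)
        · rw [hcnt]; split_ifs <;> simp_all
        · rw [hcnt]; split_ifs <;> simp_all
      · apply two_le_pcfUc (show ψ t ≠ ψ m₁ from ht1)
        · rw [hcnt]; split_ifs <;> simp_all
        · rw [hcnt]; split_ifs <;> simp_all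

lemma exists_color_notin (s : Finset (Fin 9)) (h : s.card ≤ 8) : ∃ c : Fin 9, c ∉ s := by
  by_contra h'
  push_neg at h'
  have : (Finset.univ : Finset (Fin 9)) ⊆ s := fun c _ => h' c
  have := Finset.card_le_card this
  simp at this
  omega

lemma ncard_nbhd [Fintype V] (H : SimpleGraph V) [DecidableRel H.Adj] (w : V) :
    {a | H.Adj w a}.ncard = (Finset.univ.filter (H.Adj w ·)).card := by
  rw [← Set.ncard_coe_finset]
  congr 1
  ext a
  simp

lemma uc_bridge [Fintype V] (H : SimpleGraph V) [DecidableRel H.Adj] (ψ : V → Fin 9) (w : V) :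
    {c : Fin 9 | {a | H.Adj w a ∧ ψ a = c}.ncard = 1}.ncard =
      pcfUc ψ (Finset.univ.filter (H.Adj w ·)) := by
  have inner : ∀ c : Fin 9,
      {a | H.Adj w a ∧ ψ a = c}.ncard = pcfCnt ψ (Finset.univ.filter (H.Adj w ·)) c := by
    intro c
    rw [show {a | H.Adj w a ∧ ψ a = c} =
        ↑((Finset.univ.filter (H.Adj w ·)).filter fun a => ψ a = c) by
      ext a; simp]
    rw [Set.ncard_coe_finset]
    rfl
  rw [show {c : Fin 9 | {a | H.Adj w a ∧ ψ a = c}.ncard = 1} =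
      ↑(Finset.univ.filter fun c : Fin 9 =>
        pcfCnt ψ (Finset.univ.filter (H.Adj w ·)) c = 1) by
    ext c
    simp only [Set.mem_setOf_eq, Finset.coe_filter, Finset.mem_univ, true_and, inner c]]
  rw [Set.ncard_coe_finset]
  rfl

end PCFHelpers
/-- An `h`-PCF coloring of `G`: a proper coloring `φ` such that for every vertex `v`,
at least `min h (d_G(v))` colors appear on exactly one neighbor of `v`. -/
def SimpleGraph.IsPCFColoring {V α : Type*} (G : SimpleGraph V) (h : ℕ)
    (φ : V → α) : Prop :=
  (∀ ⦃u w : V⦄, G.Adj u w → φ u ≠ φ w) ∧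
  ∀ v : V, min h {u | G.Adj v u}.ncard ≤
    {c : α | {u | G.Adj v u ∧ φ u = c}.ncard = 1}.ncard

/-- `G` admits an `h`-PCF `k`-coloring. -/
def SimpleGraph.HasPCFColoring {V : Type*} (G : SimpleGraph V) (h k : ℕ) : Prop :=
  ∃ φ : V → Fin k, G.IsPCFColoring h φ

/-- The `S`-reduced graph `G*S`: delete `S`, and join two distinct nonadjacent
vertices outside `S` that have a common neighbor in `S` (vertices of `S`
remain as isolated vertices). -/
def SimpleGraph.reduce {V : Type*} (G : SimpleGraph V) (S : Set V) :
    SimpleGraph V where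
  Adj u w := u ∉ S ∧ w ∉ S ∧ u ≠ w ∧
    (G.Adj u w ∨ ∃ s ∈ S, G.Adj u s ∧ G.Adj s w)
  symm := by
    constructor
    rintro u w ⟨hu, hw, hne, h | ⟨s, hs, h1, h2⟩⟩
    · exact ⟨hw, hu, hne.symm, Or.inl h.symm⟩
    · exact ⟨hw, hu, hne.symm, Or.inr ⟨s, hs, h2.symm, h1.symm⟩⟩
  loopless := ⟨fun u h => h.2.2.1 rfl⟩

set_option maxHeartbeats 16000000 in
theorem reduce_five_cycle_three_consecutive_three_vertices {V : Type*} [Fintype V]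
    (G : SimpleGraph V)
    (hΔ : ∀ a : V, {b | G.Adj a b}.ncard ≤ 4)
    (htf : G.CliqueFree 3)
    (x y z u v y₁ u₁ : V)
    (hxy : G.Adj x y) (hyz : G.Adj y z) (hzu : G.Adj z u)
    (huv : G.Adj u v) (hvx : G.Adj v x)
    (hdist : List.Pairwise (· ≠ ·) [x, y, z, u, v])
    (hdy : {a | G.Adj y a}.ncard = 3)
    (hdz : {a | G.Adj z a}.ncard = 3)
    (hdu : {a | G.Adj u a}.ncard = 3)
    (hdx : {a | G.Adj x a}.ncard = 4)
    (hdv : {a | G.Adj v a}.ncard = 4)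
    (hyy₁ : G.Adj y y₁) (huu₁ : G.Adj u u₁)
    (hy₁ : y₁ ∉ ({x, y, z, u, v} : Set V))
    (hu₁ : u₁ ∉ ({x, y, z, u, v} : Set V))
    (hy₁u₁ : y₁ ≠ u₁)
    (hdy₁ : {a | G.Adj y₁ a}.ncard = 4)
    (hdu₁ : {a | G.Adj u₁ a}.ncard = 4)
    (h : (G.reduce {x, y, z, u, v}).HasPCFColoring 2 9) :
    G.HasPCFColoring 2 9 := by
  classical
  obtain ⟨φ, hφp, hφu⟩ := h
  set Sset : Set V := {x, y, z, u, v} with hSset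
  set G' : SimpleGraph V := G.reduce Sset with hG'
  -- pairwise distinctness of the cycle
  simp only [List.pairwise_cons, List.mem_cons, List.mem_singleton, List.not_mem_nil,
    forall_eq_or_imp, forall_eq, ne_eq, IsEmpty.forall_iff, and_true,
    List.Pairwise.nil, or_false, false_or] at hdist
  obtain ⟨⟨dxy, dxz, dxu, dxv⟩, ⟨dyz, dyu, dyv⟩, ⟨dzu, dzv⟩, duv, -⟩ := hdist
  -- triangle-freeness
  have tri : ∀ {a b c : V}, G.Adj a b → G.Adj a c → G.Adj b c → False := by
    intro a b c h1 h2 h3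
    exact htf {a, b, c} (SimpleGraph.is3Clique_triple_iff.mpr ⟨h1, h2, h3⟩)
  -- memberships in S
  have memS : ∀ a : V, a ∈ Sset ↔ a = x ∨ a = y ∨ a = z ∨ a = u ∨ a = v := by
    intro a; simp [hSset]
  simp only [hSset, Set.mem_insert_iff, Set.mem_singleton_iff, not_or] at hy₁ hu₁
  obtain ⟨dy₁x, dy₁y, dy₁z, dy₁u, dy₁v⟩ := hy₁
  obtain ⟨du₁x, du₁y, du₁z, du₁u, du₁v⟩ := hu₁
  -- chords absent
  have nxz : ¬G.Adj x z := fun hh => tri hxy hh hyz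
  have nxu : ¬G.Adj x u := fun hh => tri hh hvx.symm huv
  have nyu : ¬G.Adj y u := fun hh => tri hyz hh hzu
  have nyv : ¬G.Adj y v := fun hh => tri hh hxy.symm hvx
  have nzv : ¬G.Adj z v := fun hh => tri hzu hh huv
  -- neighborhoods as finsets
  set NB : V → Finset V := fun w => Finset.univ.filter (G.Adj w ·) with hNB
  have memNB : ∀ w a, a ∈ NB w ↔ G.Adj w a := by intro w a; simp [hNB]
  have degNB : ∀ w, {a | G.Adj w a}.ncard = (NB w).card := fun w => ncard_nbhd G w
  have cNBx : (NB x).card = 4 := by rw [← degNB]; exact hdx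
  have cNBy : (NB y).card = 3 := by rw [← degNB]; exact hdy
  have cNBz : (NB z).card = 3 := by rw [← degNB]; exact hdz
  have cNBu : (NB u).card = 3 := by rw [← degNB]; exact hdu
  have cNBv : (NB v).card = 4 := by rw [← degNB]; exact hdv
  have cNBy₁ : (NB y₁).card = 4 := by rw [← degNB]; exact hdy₁
  have cNBu₁ : (NB u₁).card = 4 := by rw [← degNB]; exact hdu₁
  have cNBle : ∀ w, (NB w).card ≤ 4 := fun w => by rw [← degNB]; exact hΔ w
  -- N(y) = {x, z, y₁}
  have hNy : NB y = {x, z, y₁} := by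
    symm
    apply Finset.eq_of_subset_of_card_le
    · intro a ha
      simp only [Finset.mem_insert, Finset.mem_singleton] at ha
      rcases ha with rfl | rfl | rfl
      · exact (memNB y a).mpr hxy.symm
      · exact (memNB y a).mpr hyz
      · exact (memNB y a).mpr hyy₁
    · rw [cNBy]
      have m1 : x ∉ ({z, y₁} : Finset V) := by
        simp only [Finset.mem_insert, Finset.mem_singleton]
        push_neg
        exact ⟨dxz, fun e => dy₁x e.symm⟩
      have m2 : z ∉ ({y₁} : Finset V) := by
        simp only [Finset.mem_singleton]
        exact fun e => dy₁z e.symm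
      rw [Finset.card_insert_of_notMem m1, Finset.card_insert_of_notMem m2,
        Finset.card_singleton]
  have hNu : NB u = {z, v, u₁} := by
    symm
    apply Finset.eq_of_subset_of_card_le
    · intro a ha
      simp only [Finset.mem_insert, Finset.mem_singleton] at ha
      rcases ha with rfl | rfl | rfl
      · exact (memNB u a).mpr hzu.symm
      · exact (memNB u a).mpr huv
      · exact (memNB u a).mpr huu₁
    · rw [cNBu]
      have m1 : z ∉ ({v, u₁} : Finset V) := by
        simp only [Finset.mem_insert, Finset.mem_singleton]
        push_neg
        exact ⟨dzv, fun e => du₁z e.symm⟩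
      have m2 : v ∉ ({u₁} : Finset V) := by
        simp only [Finset.mem_singleton]
        exact fun e => du₁v e.symm
      rw [Finset.card_insert_of_notMem m1, Finset.card_insert_of_notMem m2,
        Finset.card_singleton]
  -- z₁
  have hsubz : ({y, u} : Finset V) ⊆ NB z := by
    intro a ha
    simp only [Finset.mem_insert, Finset.mem_singleton] at ha
    rcases ha with rfl | rfl
    · exact (memNB z a).mpr hyz.symm
    · exact (memNB z a).mpr hzu
  have hRz : (NB z \ {y, u}).card = 1 := by
    rw [Finset.card_sdiff_of_subset hsubz, cNBz, Finset.card_pair dyu]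
  obtain ⟨z₁, hz₁⟩ := Finset.card_eq_one.mp hRz
  have hNz : NB z = {y, u, z₁} := by
    have := Finset.union_sdiff_of_subset hsubz
    rw [hz₁] at this
    rw [← this]
    ext a
    simp only [Finset.mem_union, Finset.mem_insert, Finset.mem_singleton]
    tauto
  have hazz₁ : G.Adj z z₁ := by
    have : z₁ ∈ NB z := by rw [hNz]; simp
    exact (memNB z z₁).mp this
  have dz₁y : z₁ ≠ y := by
    have : z₁ ∈ NB z \ {y, u} := by rw [hz₁]; simp
    simp only [Finset.mem_sdiff, Finset.mem_insert, Finset.mem_singleton, not_or] at this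
    exact this.2.1
  have dz₁u : z₁ ≠ u := by
    have : z₁ ∈ NB z \ {y, u} := by rw [hz₁]; simp
    simp only [Finset.mem_sdiff, Finset.mem_insert, Finset.mem_singleton, not_or] at this
    exact this.2.2
  have dz₁z : z₁ ≠ z := fun e => G.loopless.irrefl z (e ▸ hazz₁)
  have dz₁x : z₁ ≠ x := fun e => nxz (e ▸ hazz₁).symm
  have dz₁v : z₁ ≠ v := fun e => nzv (e ▸ hazz₁)
  have dz₁y₁ : z₁ ≠ y₁ := fun e => tri hyz hyy₁ (e ▸ hazz₁)
  have dz₁u₁ : z₁ ≠ u₁ := fun e => tri (show G.Adj z u₁ from e ▸ hazz₁) hzu huu₁.symm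
  -- x₁, x₂
  have hsubx : ({y, v} : Finset V) ⊆ NB x := by
    intro a ha
    simp only [Finset.mem_insert, Finset.mem_singleton] at ha
    rcases ha with rfl | rfl
    · exact (memNB x a).mpr hxy
    · exact (memNB x a).mpr hvx.symm
  have hRx : (NB x \ {y, v}).card = 2 := by
    rw [Finset.card_sdiff_of_subset hsubx, cNBx, Finset.card_pair dyv]
  obtain ⟨x₁, x₂, dx₁x₂, hx12⟩ := Finset.card_eq_two.mp hRx
  have hNx : NB x = {y, v, x₁, x₂} := by
    have := Finset.union_sdiff_of_subset hsubx
    rw [hx12] at this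
    rw [← this]
    ext a
    simp only [Finset.mem_union, Finset.mem_insert, Finset.mem_singleton]
    tauto
  have haxx₁ : G.Adj x x₁ := by
    have : x₁ ∈ NB x := by rw [hNx]; simp
    exact (memNB x x₁).mp this
  have haxx₂ : G.Adj x x₂ := by
    have : x₂ ∈ NB x := by rw [hNx]; simp
    exact (memNB x x₂).mp this
  have hxmem : ∀ w, w = x₁ ∨ w = x₂ → w ≠ y ∧ w ≠ v := by
    intro w hw
    have : w ∈ NB x \ {y, v} := by rw [hx12]; rcases hw with rfl | rfl <;> simp
    simp only [Finset.mem_sdiff, Finset.mem_insert, Finset.mem_singleton, not_or] at this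
    exact this.2
  have dx₁y : x₁ ≠ y := (hxmem x₁ (Or.inl rfl)).1
  have dx₁v : x₁ ≠ v := (hxmem x₁ (Or.inl rfl)).2
  have dx₂y : x₂ ≠ y := (hxmem x₂ (Or.inr rfl)).1
  have dx₂v : x₂ ≠ v := (hxmem x₂ (Or.inr rfl)).2
  have dx₁x : x₁ ≠ x := fun e => G.loopless.irrefl x (e ▸ haxx₁)
  have dx₂x : x₂ ≠ x := fun e => G.loopless.irrefl x (e ▸ haxx₂)
  have dx₁z : x₁ ≠ z := fun e => nxz (e ▸ haxx₁)
  have dx₂z : x₂ ≠ z := fun e => nxz (e ▸ haxx₂)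
  have dx₁u : x₁ ≠ u := fun e => nxu (e ▸ haxx₁)
  have dx₂u : x₂ ≠ u := fun e => nxu (e ▸ haxx₂)
  have dx₁y₁ : x₁ ≠ y₁ := fun e => tri hxy (e ▸ haxx₁) hyy₁
  have dx₂y₁ : x₂ ≠ y₁ := fun e => tri hxy (e ▸ haxx₂) hyy₁
  -- v₁, v₂
  have hsubv : ({u, x} : Finset V) ⊆ NB v := by
    intro a ha
    simp only [Finset.mem_insert, Finset.mem_singleton] at ha
    rcases ha with rfl | rfl
    · exact (memNB v a).mpr huv.symm
    · exact (memNB v a).mpr hvx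
  have hRv : (NB v \ {u, x}).card = 2 := by
    rw [Finset.card_sdiff_of_subset hsubv, cNBv, Finset.card_pair (fun e : u = x => dxu e.symm)]
  obtain ⟨v₁, v₂, dv₁v₂, hv12⟩ := Finset.card_eq_two.mp hRv
  have hNv : NB v = {u, x, v₁, v₂} := by
    have := Finset.union_sdiff_of_subset hsubv
    rw [hv12] at this
    rw [← this]
    ext a
    simp only [Finset.mem_union, Finset.mem_insert, Finset.mem_singleton]
    tauto
  have havv₁ : G.Adj v v₁ := by
    have : v₁ ∈ NB v := by rw [hNv]; simp
    exact (memNB v v₁).mp this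
  have havv₂ : G.Adj v v₂ := by
    have : v₂ ∈ NB v := by rw [hNv]; simp
    exact (memNB v v₂).mp this
  have hvmem : ∀ w, w = v₁ ∨ w = v₂ → w ≠ u ∧ w ≠ x := by
    intro w hw
    have : w ∈ NB v \ {u, x} := by rw [hv12]; rcases hw with rfl | rfl <;> simp
    simp only [Finset.mem_sdiff, Finset.mem_insert, Finset.mem_singleton, not_or] at this
    exact this.2
  have dv₁u : v₁ ≠ u := (hvmem v₁ (Or.inl rfl)).1
  have dv₁x : v₁ ≠ x := (hvmem v₁ (Or.inl rfl)).2
  have dv₂u : v₂ ≠ u := (hvmem v₂ (Or.inr rfl)).1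
  have dv₂x : v₂ ≠ x := (hvmem v₂ (Or.inr rfl)).2
  have dv₁v : v₁ ≠ v := fun e => G.loopless.irrefl v (e ▸ havv₁)
  have dv₂v : v₂ ≠ v := fun e => G.loopless.irrefl v (e ▸ havv₂)
  have dv₁y : v₁ ≠ y := fun e => nyv (e ▸ havv₁).symm
  have dv₂y : v₂ ≠ y := fun e => nyv (e ▸ havv₂).symm
  have dv₁z : v₁ ≠ z := fun e => nzv (e ▸ havv₁).symm
  have dv₂z : v₂ ≠ z := fun e => nzv (e ▸ havv₂).symm
  have dv₁u₁ : v₁ ≠ u₁ := fun e => tri huv huu₁ (show G.Adj v u₁ from e ▸ havv₁)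
  have dv₂u₁ : v₂ ≠ u₁ := fun e => tri huv huu₁ (show G.Adj v u₁ from e ▸ havv₂)
  -- no vertex adjacent to both x and v
  have hxvdisj : ∀ a, G.Adj x a → G.Adj v a → False := fun a h1 h2 => tri hvx.symm h1 h2
  -- memberships outside S
  have hy₁S : y₁ ∉ Sset := by rw [memS]; push_neg; exact ⟨dy₁x, dy₁y, dy₁z, dy₁u, dy₁v⟩
  have hu₁S : u₁ ∉ Sset := by rw [memS]; push_neg; exact ⟨du₁x, du₁y, du₁z, du₁u, du₁v⟩
  have hz₁S : z₁ ∉ Sset := by rw [memS]; push_neg; exact ⟨dz₁x, dz₁y, dz₁z, dz₁u, dz₁v⟩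
  have hx₁S : x₁ ∉ Sset := by rw [memS]; push_neg; exact ⟨dx₁x, dx₁y, dx₁z, dx₁u, dx₁v⟩
  have hx₂S : x₂ ∉ Sset := by rw [memS]; push_neg; exact ⟨dx₂x, dx₂y, dx₂z, dx₂u, dx₂v⟩
  have hv₁S : v₁ ∉ Sset := by rw [memS]; push_neg; exact ⟨dv₁x, dv₁y, dv₁z, dv₁u, dv₁v⟩
  have hv₂S : v₂ ∉ Sset := by rw [memS]; push_neg; exact ⟨dv₂x, dv₂y, dv₂z, dv₂u, dv₂v⟩
  have hxS : x ∈ Sset := by rw [memS]; tauto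
  have hyS : y ∈ Sset := by rw [memS]; tauto
  have hzS : z ∈ Sset := by rw [memS]; tauto
  have huS : u ∈ Sset := by rw [memS]; tauto
  have hvS : v ∈ Sset := by rw [memS]; tauto
  -- G' adjacency unfolding
  have hG'adj : ∀ a b : V, G'.Adj a b ↔ (a ∉ Sset ∧ b ∉ Sset ∧ a ≠ b ∧
      (G.Adj a b ∨ ∃ s ∈ Sset, G.Adj a s ∧ G.Adj s b)) := fun a b => Iff.rfl
  -- colors of the two pairs are distinct
  have hpxx : φ x₁ ≠ φ x₂ :=
    hφp (show G'.Adj x₁ x₂ from ⟨hx₁S, hx₂S, dx₁x₂, Or.inr ⟨x, hxS, haxx₁.symm, haxx₂⟩⟩)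
  have hpvv : φ v₁ ≠ φ v₂ :=
    hφp (show G'.Adj v₁ v₂ from ⟨hv₁S, hv₂S, dv₁v₂, Or.inr ⟨v, hvS, havv₁.symm, havv₂⟩⟩)
  -- hypothesis in finset form
  set NB' : V → Finset V := fun w => Finset.univ.filter (G'.Adj w ·) with hNB'
  have memNB' : ∀ w a, a ∈ NB' w ↔ G'.Adj w a := by intro w a; simp [hNB']
  have hUC' : ∀ w, min 2 (NB' w).card ≤ pcfUc φ (NB' w) := by
    intro w
    have := hφu w
    rwa [ncard_nbhd G' w, uc_bridge G' φ w] at this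
  -- forbidden color sets
  set SF : Finset V := ({x, y, z, u, v} : Finset V) with hSF
  have memSF : ∀ a, a ∈ SF ↔ a ∈ Sset := by intro a; rw [memS]; simp [hSF]
  set Fimg : V → Finset (Fin 9) := fun w =>
    if ((NB w \ SF).image φ).card ≤ 2 then (NB w \ SF).image φ else ∅ with hFimg
  have hFimgcard : ∀ w, (Fimg w).card ≤ 2 := by
    intro w
    rw [hFimg]
    dsimp only
    split_ifs with hh
    · exact hh
    · simp
  have hFimgspec : ∀ w (c : Fin 9), c ∉ Fimg w →
      (∀ a ∈ NB w \ SF, φ a ≠ c) ∨ 3 ≤ ((NB w \ SF).image φ).card := by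
    intro w c hc
    by_cases hh : ((NB w \ SF).image φ).card ≤ 2
    · left
      intro a ha hac
      apply hc
      rw [hFimg]
      dsimp only
      rw [if_pos hh]
      exact Finset.mem_image.mpr ⟨a, ha, hac⟩
    · right; omega
  have hFimgmem : ∀ w (c : Fin 9), c ∉ Fimg w → ((NB w \ SF).image φ).card ≤ 2 →
      ∀ a ∈ NB w \ SF, φ a ≠ c := by
    intro w c hc hh a ha hac
    apply hc
    rw [hFimg]
    dsimp only
    rw [if_pos hh]
    exact Finset.mem_image.mpr ⟨a, ha, hac⟩
  -- choose the five colors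
  set Bx : Finset (Fin 9) := ({φ x₁, φ x₂, φ y₁} : Finset (Fin 9)) ∪ (Fimg x₁ ∪ Fimg x₂)
    with hBx
  set Bv : Finset (Fin 9) := ({φ v₁, φ v₂, φ u₁} : Finset (Fin 9)) ∪ (Fimg v₁ ∪ Fimg v₂)
    with hBv
  set Bz : Finset (Fin 9) := ({φ y₁, φ z₁, φ u₁} : Finset (Fin 9)) ∪ Fimg z₁ with hBz
  have ctri : ∀ a b c : Fin 9, ({a, b, c} : Finset (Fin 9)).card ≤ 3 := by
    intro a b c
    refine (Finset.card_insert_le _ _).trans (Nat.succ_le_succ ?_)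
    refine (Finset.card_insert_le _ _).trans (Nat.succ_le_succ ?_)
    simp
  obtain ⟨cx, hcx⟩ := exists_color_notin Bx (by
    rw [hBx]
    refine le_trans (Finset.card_union_le _ _) ?_
    have := Finset.card_union_le (Fimg x₁) (Fimg x₂)
    have h1 := hFimgcard x₁
    have h2 := hFimgcard x₂
    have h3 := ctri (φ x₁) (φ x₂) (φ y₁)
    omega)
  obtain ⟨cv, hcv⟩ := exists_color_notin (Bv ∪ {cx}) (by
    refine le_trans (Finset.card_union_le _ _) ?_
    rw [hBv]
    have h0 := Finset.card_union_le ({φ v₁, φ v₂, φ u₁} : Finset (Fin 9)) (Fimg v₁ ∪ Fimg v₂)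
    have := Finset.card_union_le (Fimg v₁) (Fimg v₂)
    have h1 := hFimgcard v₁
    have h2 := hFimgcard v₂
    have h3 := ctri (φ v₁) (φ v₂) (φ u₁)
    simp only [Finset.card_singleton]
    omega)
  obtain ⟨cz, hcz⟩ := exists_color_notin (Bz ∪ {cx, cv}) (by
    refine le_trans (Finset.card_union_le _ _) ?_
    rw [hBz]
    have h0 := Finset.card_union_le ({φ y₁, φ z₁, φ u₁} : Finset (Fin 9)) (Fimg z₁)
    have h1 := hFimgcard z₁
    have h3 := ctri (φ y₁) (φ z₁) (φ u₁)
    have h4 : ({cx, cv} : Finset (Fin 9)).card ≤ 2 := Finset.card_insert_le _ _ |>.trans (by simp)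
    omega)
  obtain ⟨cu, hcu⟩ := exists_color_notin ({φ u₁, φ z₁, φ v₁, φ v₂, cv, cz} : Finset (Fin 9)) (by
    iterate 5 refine (Finset.card_insert_le _ _).trans (Nat.succ_le_succ ?_)
    simp)
  obtain ⟨cy, hcy⟩ := exists_color_notin
    ({φ y₁, φ z₁, φ x₁, φ x₂, cx, cz, cu} : Finset (Fin 9)) (by
    iterate 6 refine (Finset.card_insert_le _ _).trans (Nat.succ_le_succ ?_)
    simp)
  -- individual facts about the chosen colors
  simp only [Finset.mem_union, Finset.mem_insert, Finset.mem_singleton, not_or, hBx, hBv, hBz]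
    at hcx hcv hcz hcu hcy
  obtain ⟨⟨cxx₁, cxx₂, cxy₁⟩, cxF1, cxF2⟩ := hcx
  obtain ⟨⟨⟨cvv₁, cvv₂, cvu₁⟩, cvF1, cvF2⟩, cvcx⟩ := hcv
  obtain ⟨⟨⟨czy₁, czz₁, czu₁⟩, czF⟩, czcx, czcv⟩ := hcz
  obtain ⟨cuu₁, cuz₁, cuv₁, cuv₂, cucv, cucz⟩ := hcu
  obtain ⟨cyy₁, cyz₁, cyx₁, cyx₂, cycx, cycz, cycu⟩ := hcy
  -- the new coloring
  set φ' : V → Fin 9 := fun a =>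
    if a = x then cx else if a = y then cy else if a = z then cz
    else if a = u then cu else if a = v then cv else φ a with hφ'
  have px : φ' x = cx := by simp [hφ']
  have py : φ' y = cy := by simp [hφ', Ne.symm dxy]
  have pz : φ' z = cz := by simp [hφ', Ne.symm dxz, Ne.symm dyz]
  have pu : φ' u = cu := by
    simp [hφ', Ne.symm dxu, Ne.symm dyu, Ne.symm dzu]
  have pv : φ' v = cv := by
    simp [hφ', Ne.symm dxv, Ne.symm dyv, Ne.symm dzv, Ne.symm duv]
  have pout : ∀ a, a ∉ Sset → φ' a = φ a := by
    intro a ha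
    rw [memS] at ha
    push_neg at ha
    obtain ⟨h1, h2, h3, h4, h5⟩ := ha
    simp [hφ', h1, h2, h3, h4, h5]
  -- properness
  have hkeyprop : ∀ a b, G.Adj a b → a ∈ Sset → φ' a ≠ φ' b := by
    intro a b hab haS
    rw [memS] at haS
    rcases haS with rfl | rfl | rfl | rfl | rfl
    · have hb : b ∈ NB a := (memNB a b).mpr hab
      rw [hNx] at hb
      simp only [Finset.mem_insert, Finset.mem_singleton] at hb
      rcases hb with rfl | rfl | rfl | rfl
      · rw [px, py]; exact fun e => cycx e.symm
      · rw [px, pv]; exact fun e => cvcx e.symm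
      · rw [px, pout _ hx₁S]; exact cxx₁
      · rw [px, pout _ hx₂S]; exact cxx₂
    · have hb : b ∈ NB a := (memNB a b).mpr hab
      rw [hNy] at hb
      simp only [Finset.mem_insert, Finset.mem_singleton] at hb
      rcases hb with rfl | rfl | rfl
      · rw [py, px]; exact cycx
      · rw [py, pz]; exact cycz
      · rw [py, pout _ hy₁S]; exact cyy₁
    · have hb : b ∈ NB a := (memNB a b).mpr hab
      rw [hNz] at hb
      simp only [Finset.mem_insert, Finset.mem_singleton] at hb
      rcases hb with rfl | rfl | rfl
      · rw [pz, py]; exact fun e => cycz e.symm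
      · rw [pz, pu]; exact fun e => cucz e.symm
      · rw [pz, pout _ hz₁S]; exact czz₁
    · have hb : b ∈ NB a := (memNB a b).mpr hab
      rw [hNu] at hb
      simp only [Finset.mem_insert, Finset.mem_singleton] at hb
      rcases hb with rfl | rfl | rfl
      · rw [pu, pz]; exact cucz
      · rw [pu, pv]; exact cucv
      · rw [pu, pout _ hu₁S]; exact cuu₁
    · have hb : b ∈ NB a := (memNB a b).mpr hab
      rw [hNv] at hb
      simp only [Finset.mem_insert, Finset.mem_singleton] at hb
      rcases hb with rfl | rfl | rfl | rfl
      · rw [pv, pu]; exact fun e => cucv e.symm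
      · rw [pv, px]; exact cvcx
      · rw [pv, pout _ hv₁S]; exact cvv₁
      · rw [pv, pout _ hv₂S]; exact cvv₂
  have hprop : ∀ ⦃a b : V⦄, G.Adj a b → φ' a ≠ φ' b := by
    intro a b hab
    by_cases haS : a ∈ Sset
    · exact hkeyprop a b hab haS
    · by_cases hbS : b ∈ Sset
      · exact fun e => hkeyprop b a hab.symm hbS e.symm
      · rw [pout _ haS, pout _ hbS]
        exact hφp (show G'.Adj a b from ⟨haS, hbS, hab.ne, Or.inl hab⟩)
  -- uniqueness
  have huniq : ∀ w, min 2 {a | G.Adj w a}.ncard ≤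
      {c : Fin 9 | {a | G.Adj w a ∧ φ' a = c}.ncard = 1}.ncard := by
    intro w
    rw [ncard_nbhd G w, uc_bridge G φ' w]
    show min 2 (NB w).card ≤ pcfUc φ' (NB w)
    by_cases hwx : w = x
    · subst hwx
      rw [hNx]
      refine le_trans (min_le_left _ _) ?_
      refine pcf_quad φ' y v x₁ x₂ dyv (Ne.symm dx₁y) (Ne.symm dx₂y) (Ne.symm dx₁v)
        (Ne.symm dx₂v) dx₁x₂ ?_ (Or.inl ?_)
      · rw [pout _ hx₁S, pout _ hx₂S]; exact hpxx
      · rw [py, pout _ hx₁S, pout _ hx₂S]; exact ⟨cyx₁, cyx₂⟩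
    by_cases hwy : w = y
    · subst hwy
      rw [hNy]
      refine le_trans (min_le_left _ _) ?_
      refine pcf_triple φ' x z y₁ dxz (fun e => dy₁x e.symm) (fun e => dy₁z e.symm) ?_ ?_ ?_
      · rw [px, pz]; exact fun e => czcx e.symm
      · rw [px, pout _ hy₁S]; exact cxy₁
      · rw [pz, pout _ hy₁S]; exact czy₁
    by_cases hwz : w = z
    · subst hwz
      rw [hNz]
      refine le_trans (min_le_left _ _) ?_
      refine pcf_triple φ' y u z₁ dyu (Ne.symm dz₁y) (Ne.symm dz₁u) ?_ ?_ ?_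
      · rw [py, pu]; exact cycu
      · rw [py, pout _ hz₁S]; exact cyz₁
      · rw [pu, pout _ hz₁S]; exact cuz₁
    by_cases hwu : w = u
    · subst hwu
      rw [hNu]
      refine le_trans (min_le_left _ _) ?_
      refine pcf_triple φ' z v u₁ dzv (fun e => du₁z e.symm) (fun e => du₁v e.symm) ?_ ?_ ?_
      · rw [pz, pv]; exact czcv
      · rw [pz, pout _ hu₁S]; exact czu₁
      · rw [pv, pout _ hu₁S]; exact cvu₁
    by_cases hwv : w = v
    · subst hwv
      rw [hNv]
      refine le_trans (min_le_left _ _) ?_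
      refine pcf_quad φ' u x v₁ v₂ (fun e => dxu e.symm) (Ne.symm dv₁u) (Ne.symm dv₂u)
        (Ne.symm dv₁x) (Ne.symm dv₂x) dv₁v₂ ?_ (Or.inl ?_)
      · rw [pout _ hv₁S, pout _ hv₂S]; exact hpvv
      · rw [pu, pout _ hv₁S, pout _ hv₂S]; exact ⟨cuv₁, cuv₂⟩
    have hwS : w ∉ Sset := by rw [memS]; push_neg; exact ⟨hwx, hwy, hwz, hwu, hwv⟩
    by_cases hay : G.Adj y w
    · -- w = y₁
      have hwy₁ : w = y₁ := by
        have hb := (memNB y w).mpr hay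
        rw [hNy] at hb
        simp only [Finset.mem_insert, Finset.mem_singleton] at hb
        tauto
      rw [hwy₁] at hay hwS ⊢
      by_cases hav : G.Adj v y₁
      · -- case B : w = y₁ ∈ {v₁, v₂}
        have nax : ¬G.Adj x y₁ := fun hh => tri hxy hh hyy₁
        have naz : ¬G.Adj z y₁ := by
          intro hh
          have hb := (memNB z y₁).mpr hh
          rw [hNz] at hb
          simp only [Finset.mem_insert, Finset.mem_singleton] at hb
          rcases hb with e | e | e
          · exact dy₁y e
          · exact dy₁u e
          · exact dz₁y₁ e.symm
        have nau : ¬G.Adj u y₁ := by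
          intro hh
          have hb := (memNB u y₁).mpr hh
          rw [hNu] at hb
          simp only [Finset.mem_insert, Finset.mem_singleton] at hb
          rcases hb with e | e | e
          · exact dy₁z e
          · exact dy₁v e
          · exact hy₁u₁ e
        have hwv12 : y₁ = v₁ ∨ y₁ = v₂ := by
          have hb := (memNB v y₁).mpr hav
          rw [hNv] at hb
          simp only [Finset.mem_insert, Finset.mem_singleton] at hb
          rcases hb with hb | hb | hb | hb
          · exact absurd huS (by rw [← hb]; exact hwS)
          · exact absurd hxS (by rw [← hb]; exact hwS)
          · exact Or.inl hb
          · exact Or.inr hb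
        obtain ⟨p, havp, hpS, hwp, hcvFw, hother⟩ :
            ∃ p, G.Adj v p ∧ p ∉ Sset ∧ y₁ ≠ p ∧ cv ∉ Fimg y₁ ∧
              (∀ a, G.Adj v a → a ∉ Sset → a ≠ y₁ → a = p) := by
          rcases hwv12 with hb | hb
          · refine ⟨v₂, havv₂, hv₂S, ?_, ?_, ?_⟩
            · rw [hb]; exact dv₁v₂
            · rw [hb]; exact cvF1
            · intro a ha haS hne
              have hmem := (memNB v a).mpr ha
              rw [hNv] at hmem
              simp only [Finset.mem_insert, Finset.mem_singleton] at hmem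
              rcases hmem with hb2 | hb2 | hb2 | hb2
              · exact absurd huS (by rw [← hb2]; exact haS)
              · exact absurd hxS (by rw [← hb2]; exact haS)
              · exact absurd (hb2.trans hb.symm) hne
              · exact hb2
          · refine ⟨v₁, havv₁, hv₁S, ?_, ?_, ?_⟩
            · rw [hb]; exact dv₁v₂.symm
            · rw [hb]; exact cvF2
            · intro a ha haS hne
              have hmem := (memNB v a).mpr ha
              rw [hNv] at hmem
              simp only [Finset.mem_insert, Finset.mem_singleton] at hmem
              rcases hmem with hb2 | hb2 | hb2 | hb2
              · exact absurd huS (by rw [← hb2]; exact haS)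
              · exact absurd hxS (by rw [← hb2]; exact haS)
              · exact hb2
              · exact absurd (hb2.trans hb.symm) hne
        have hyM : y ∉ NB y₁ \ SF :=
          fun hmem => (Finset.mem_sdiff.mp hmem).2 ((memSF y).mpr hyS)
        have hvM : v ∉ NB y₁ \ SF :=
          fun hmem => (Finset.mem_sdiff.mp hmem).2 ((memSF v).mpr hvS)
        have hpM : p ∉ NB y₁ \ SF := by
          intro hmem
          exact tri hav havp ((memNB y₁ p).mp (Finset.mem_sdiff.mp hmem).1)
        have hins : NB y₁ = insert y (insert v (NB y₁ \ SF)) := by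
          ext a
          rw [Finset.mem_insert, Finset.mem_insert, Finset.mem_sdiff, memNB]
          constructor
          · intro hadj
            by_cases haSF : a ∈ SF
            · rw [memSF, memS] at haSF
              rcases haSF with rfl | rfl | rfl | rfl | rfl
              · exact absurd hadj.symm nax
              · exact Or.inl rfl
              · exact absurd hadj.symm naz
              · exact absurd hadj.symm nau
              · exact Or.inr (Or.inl rfl)
            · exact Or.inr (Or.inr ⟨hadj, haSF⟩)
          · rintro (rfl | rfl | ⟨hadj, -⟩)
            · exact hyy₁.symm
            · exact hav.symm
            · exact hadj
        have hMcard : (NB y₁ \ SF).card = 2 := by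
          have hy2 : y ∉ insert v (NB y₁ \ SF) := by
            rw [Finset.mem_insert]
            rintro (e | e)
            · exact dyv e
            · exact hyM e
          have hc1 := Finset.card_insert_of_notMem hy2
          have hc2 := Finset.card_insert_of_notMem hvM
          rw [← hins, cNBy₁] at hc1
          omega
        obtain ⟨m₁, m₂, hm12, hMeq⟩ := Finset.card_eq_two.mp hMcard
        have hm₁ : m₁ ∈ NB y₁ \ SF := by rw [hMeq]; simp
        have hm₂ : m₂ ∈ NB y₁ \ SF := by rw [hMeq]; simp
        have hm₁S : m₁ ∉ Sset := fun hh => (Finset.mem_sdiff.mp hm₁).2 ((memSF m₁).mpr hh)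
        have hm₂S : m₂ ∉ Sset := fun hh => (Finset.mem_sdiff.mp hm₂).2 ((memSF m₂).mpr hh)
        have hpm₁ : m₁ ≠ p := by
          intro e
          apply hpM
          rw [hMeq, ← e]
          simp
        have hpm₂ : m₂ ≠ p := by
          intro e
          apply hpM
          rw [hMeq, ← e]
          simp
        have hNB'eq : NB' y₁ = (NB y₁ \ SF) ∪ {p} := by
          ext a
          rw [memNB', Finset.mem_union, Finset.mem_sdiff, memNB, Finset.mem_singleton]
          constructor
          · rintro ⟨hw1, haS, hne, hadj | ⟨s, hs, h1, h2⟩⟩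
            · exact Or.inl ⟨hadj, fun hSF => haS ((memSF a).mp hSF)⟩
            · rw [memS] at hs
              rcases hs with hs | hs | hs | hs | hs <;> rw [hs] at h1 h2
              · exact absurd h1.symm nax
              · exfalso
                have hb := (memNB y a).mpr h2
                rw [hNy] at hb
                simp only [Finset.mem_insert, Finset.mem_singleton] at hb
                rcases hb with rfl | rfl | rfl
                · exact haS hxS
                · exact haS hzS
                · exact hne rfl
              · exact absurd h1.symm naz
              · exact absurd h1.symm nau
              · exact Or.inr (hother a h2 haS (fun e => hne e.symm))
          · rintro (⟨hadj, haSF⟩ | rfl)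
            · have haS : a ∉ Sset := fun hh => haSF ((memSF a).mpr hh)
              exact ⟨hy₁S, haS, hadj.ne, Or.inl hadj⟩
            · exact ⟨hy₁S, hpS, hwp, Or.inr ⟨v, hvS, hav.symm, havp⟩⟩
        have hT : NB' y₁ = insert m₁ (insert m₂ {p}) := by
          rw [hNB'eq, hMeq]
          ext a
          simp only [Finset.mem_union, Finset.mem_insert, Finset.mem_singleton]
          tauto
        have hTcard : (insert m₁ (insert m₂ ({p} : Finset V))).card = 3 := by
          rw [Finset.card_insert_of_notMem (by simp [hm12, hpm₁]),
            Finset.card_insert_of_notMem (by simp [hpm₂]), Finset.card_singleton]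
        have hyp := hUC' y₁
        rw [hT] at hyp
        have h2uc : 2 ≤ pcfUc φ (insert m₁ (insert m₂ ({p} : Finset V))) := by
          rw [hTcard] at hyp
          simpa using hyp
        have himg := three_le_image φ hTcard h2uc
        have hab : φ m₁ ≠ φ m₂ := by
          intro e
          have himage : (insert m₁ (insert m₂ ({p} : Finset V))).image φ =
              insert (φ m₁) (insert (φ m₂) {φ p}) := by
            simp [Finset.image_insert]
          rw [himage, e, Finset.insert_idem] at himg
          have := Finset.card_insert_le (φ m₂) ({φ p} : Finset (Fin 9))
          simp only [Finset.card_singleton] at this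
          omega
        have himgle : ((NB y₁ \ SF).image φ).card ≤ 2 := by
          have := Finset.card_image_le (s := NB y₁ \ SF) (f := φ)
          omega
        have hqd := pcf_quad φ' y v m₁ m₂ dyv
          (fun e => hm₁S (e ▸ hyS)) (fun e => hm₂S (e ▸ hyS))
          (fun e => hm₁S (e ▸ hvS)) (fun e => hm₂S (e ▸ hvS)) hm12
          (by rw [pout m₁ hm₁S, pout m₂ hm₂S]; exact hab)
          (Or.inr (by
            rw [pv, pout m₁ hm₁S, pout m₂ hm₂S]
            exact ⟨fun e => (hFimgmem y₁ cv hcvFw himgle m₁ hm₁) e.symm,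
              fun e => (hFimgmem y₁ cv hcvFw himgle m₂ hm₂) e.symm⟩))
        rw [hins, hMeq]
        exact le_trans (min_le_left _ _) hqd
      · -- case A : generic y₁
        have nax : ¬G.Adj x y₁ := fun hh => tri hxy hh hyy₁
        have naz : ¬G.Adj z y₁ := by
          intro hh
          have hb := (memNB z y₁).mpr hh
          rw [hNz] at hb
          simp only [Finset.mem_insert, Finset.mem_singleton] at hb
          rcases hb with e | e | e
          · exact dy₁y e
          · exact dy₁u e
          · exact dz₁y₁ e.symm
        have nau : ¬G.Adj u y₁ := by
          intro hh
          have hb := (memNB u y₁).mpr hh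
          rw [hNu] at hb
          simp only [Finset.mem_insert, Finset.mem_singleton] at hb
          rcases hb with e | e | e
          · exact dy₁z e
          · exact dy₁v e
          · exact hy₁u₁ e
        have hyM : y ∉ NB y₁ \ SF :=
          fun hmem => (Finset.mem_sdiff.mp hmem).2 ((memSF y).mpr hyS)
        have hins : NB y₁ = insert y (NB y₁ \ SF) := by
          ext a
          rw [Finset.mem_insert, Finset.mem_sdiff, memNB]
          constructor
          · intro hadj
            by_cases haSF : a ∈ SF
            · left
              rw [memSF, memS] at haSF
              rcases haSF with rfl | rfl | rfl | rfl | rfl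
              · exact absurd hadj.symm nax
              · rfl
              · exact absurd hadj.symm naz
              · exact absurd hadj.symm nau
              · exact absurd hadj.symm hav
            · right; exact ⟨hadj, haSF⟩
          · rintro (rfl | ⟨hadj, -⟩)
            · exact hyy₁.symm
            · exact hadj
        have hMcard : (NB y₁ \ SF).card = 3 := by
          have hc := Finset.card_insert_of_notMem hyM
          rw [← hins, cNBy₁] at hc
          omega
        have hNB'eq : NB' y₁ = NB y₁ \ SF := by
          ext a
          rw [memNB', Finset.mem_sdiff, memNB]
          constructor
          · rintro ⟨hw1, haS, hne, hadj | ⟨s, hs, h1, h2⟩⟩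
            · exact ⟨hadj, fun hSF => haS ((memSF a).mp hSF)⟩
            · exfalso
              rw [memS] at hs
              rcases hs with hs | hs | hs | hs | hs <;> rw [hs] at h1 h2
              · exact nax h1.symm
              · have hb := (memNB y a).mpr h2
                rw [hNy] at hb
                simp only [Finset.mem_insert, Finset.mem_singleton] at hb
                rcases hb with rfl | rfl | rfl
                · exact haS hxS
                · exact haS hzS
                · exact hne rfl
              · exact naz h1.symm
              · exact nau h1.symm
              · exact hav h1.symm
          · rintro ⟨hadj, haSF⟩
            have haS : a ∉ Sset := fun hh => haSF ((memSF a).mpr hh)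
            exact ⟨hy₁S, haS, hadj.ne, Or.inl hadj⟩
        have hyp := hUC' y₁
        rw [hNB'eq] at hyp
        have hrb : 3 ≤ ((NB y₁ \ SF).image φ).card := by
          apply three_le_image φ hMcard
          rw [hMcard] at hyp
          simpa using hyp
        have hres := pcf_extend_one φ φ' (NB y₁ \ SF) ∅ y
          (by
            intro a ha
            rw [Finset.union_empty] at ha
            exact pout a (fun hh => (Finset.mem_sdiff.mp ha).2 ((memSF a).mpr hh)))
          (by simp) (by simp) (by omega) hyM
          (by rw [Finset.union_empty]; exact hyp)
          (Or.inr hrb)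
        rw [hins, Finset.card_insert_of_notMem hyM]
        exact hres
    by_cases hau : G.Adj u w
    · -- w = u₁
      have hwu₁ : w = u₁ := by
        have hb := (memNB u w).mpr hau
        rw [hNu] at hb
        simp only [Finset.mem_insert, Finset.mem_singleton] at hb
        tauto
      rw [hwu₁] at hau hwS hay ⊢
      by_cases hax : G.Adj x u₁
      · -- case C : w = u₁ ∈ {x₁, x₂}
        have naz : ¬G.Adj z u₁ := by
          intro hh
          have hb := (memNB z u₁).mpr hh
          rw [hNz] at hb
          simp only [Finset.mem_insert, Finset.mem_singleton] at hb
          rcases hb with e | e | e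
          · exact du₁y e
          · exact du₁u e
          · exact dz₁u₁ e.symm
        have nav : ¬G.Adj v u₁ := fun hh => tri huv huu₁ hh
        have hwx12 : u₁ = x₁ ∨ u₁ = x₂ := by
          have hb := (memNB x u₁).mpr hax
          rw [hNx] at hb
          simp only [Finset.mem_insert, Finset.mem_singleton] at hb
          rcases hb with hb | hb | hb | hb
          · exact absurd hyS (by rw [← hb]; exact hwS)
          · exact absurd hvS (by rw [← hb]; exact hwS)
          · exact Or.inl hb
          · exact Or.inr hb
        obtain ⟨p, haxp, hpS, hwp, hcxFw, hother⟩ :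
            ∃ p, G.Adj x p ∧ p ∉ Sset ∧ u₁ ≠ p ∧ cx ∉ Fimg u₁ ∧
              (∀ a, G.Adj x a → a ∉ Sset → a ≠ u₁ → a = p) := by
          rcases hwx12 with hb | hb
          · refine ⟨x₂, haxx₂, hx₂S, ?_, ?_, ?_⟩
            · rw [hb]; exact dx₁x₂
            · rw [hb]; exact cxF1
            · intro a ha haS hne
              have hmem := (memNB x a).mpr ha
              rw [hNx] at hmem
              simp only [Finset.mem_insert, Finset.mem_singleton] at hmem
              rcases hmem with hb2 | hb2 | hb2 | hb2
              · exact absurd hyS (by rw [← hb2]; exact haS)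
              · exact absurd hvS (by rw [← hb2]; exact haS)
              · exact absurd (hb2.trans hb.symm) hne
              · exact hb2
          · refine ⟨x₁, haxx₁, hx₁S, ?_, ?_, ?_⟩
            · rw [hb]; exact dx₁x₂.symm
            · rw [hb]; exact cxF2
            · intro a ha haS hne
              have hmem := (memNB x a).mpr ha
              rw [hNx] at hmem
              simp only [Finset.mem_insert, Finset.mem_singleton] at hmem
              rcases hmem with hb2 | hb2 | hb2 | hb2
              · exact absurd hyS (by rw [← hb2]; exact haS)
              · exact absurd hvS (by rw [← hb2]; exact haS)
              · exact hb2
              · exact absurd (hb2.trans hb.symm) hne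
        have huM : u ∉ NB u₁ \ SF :=
          fun hmem => (Finset.mem_sdiff.mp hmem).2 ((memSF u).mpr huS)
        have hxM : x ∉ NB u₁ \ SF :=
          fun hmem => (Finset.mem_sdiff.mp hmem).2 ((memSF x).mpr hxS)
        have hpM : p ∉ NB u₁ \ SF := by
          intro hmem
          exact tri hax haxp ((memNB u₁ p).mp (Finset.mem_sdiff.mp hmem).1)
        have hins : NB u₁ = insert u (insert x (NB u₁ \ SF)) := by
          ext a
          rw [Finset.mem_insert, Finset.mem_insert, Finset.mem_sdiff, memNB]
          constructor
          · intro hadj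
            by_cases haSF : a ∈ SF
            · rw [memSF, memS] at haSF
              rcases haSF with rfl | rfl | rfl | rfl | rfl
              · exact Or.inr (Or.inl rfl)
              · exact absurd hadj.symm hay
              · exact absurd hadj.symm naz
              · exact Or.inl rfl
              · exact absurd hadj.symm nav
            · exact Or.inr (Or.inr ⟨hadj, haSF⟩)
          · rintro (rfl | rfl | ⟨hadj, -⟩)
            · exact huu₁.symm
            · exact hax.symm
            · exact hadj
        have hMcard : (NB u₁ \ SF).card = 2 := by
          have hu2 : u ∉ insert x (NB u₁ \ SF) := by
            rw [Finset.mem_insert]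
            rintro (e | e)
            · exact dxu e.symm
            · exact huM e
          have hc1 := Finset.card_insert_of_notMem hu2
          have hc2 := Finset.card_insert_of_notMem hxM
          rw [← hins, cNBu₁] at hc1
          omega
        obtain ⟨m₁, m₂, hm12, hMeq⟩ := Finset.card_eq_two.mp hMcard
        have hm₁ : m₁ ∈ NB u₁ \ SF := by rw [hMeq]; simp
        have hm₂ : m₂ ∈ NB u₁ \ SF := by rw [hMeq]; simp
        have hm₁S : m₁ ∉ Sset := fun hh => (Finset.mem_sdiff.mp hm₁).2 ((memSF m₁).mpr hh)
        have hm₂S : m₂ ∉ Sset := fun hh => (Finset.mem_sdiff.mp hm₂).2 ((memSF m₂).mpr hh)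
        have hpm₁ : m₁ ≠ p := by
          intro e
          apply hpM
          rw [hMeq, ← e]
          simp
        have hpm₂ : m₂ ≠ p := by
          intro e
          apply hpM
          rw [hMeq, ← e]
          simp
        have hNB'eq : NB' u₁ = (NB u₁ \ SF) ∪ {p} := by
          ext a
          rw [memNB', Finset.mem_union, Finset.mem_sdiff, memNB, Finset.mem_singleton]
          constructor
          · rintro ⟨hw1, haS, hne, hadj | ⟨s, hs, h1, h2⟩⟩
            · exact Or.inl ⟨hadj, fun hSF => haS ((memSF a).mp hSF)⟩
            · rw [memS] at hs
              rcases hs with hs | hs | hs | hs | hs <;> rw [hs] at h1 h2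
              · exact Or.inr (hother a h2 haS (fun e => hne e.symm))
              · exact absurd h1.symm hay
              · exact absurd h1.symm naz
              · exfalso
                have hb := (memNB u a).mpr h2
                rw [hNu] at hb
                simp only [Finset.mem_insert, Finset.mem_singleton] at hb
                rcases hb with rfl | rfl | rfl
                · exact haS hzS
                · exact haS hvS
                · exact hne rfl
              · exact absurd h1.symm nav
          · rintro (⟨hadj, haSF⟩ | rfl)
            · have haS : a ∉ Sset := fun hh => haSF ((memSF a).mpr hh)
              exact ⟨hu₁S, haS, hadj.ne, Or.inl hadj⟩
            · exact ⟨hu₁S, hpS, hwp, Or.inr ⟨x, hxS, hax.symm, haxp⟩⟩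
        have hT : NB' u₁ = insert m₁ (insert m₂ {p}) := by
          rw [hNB'eq, hMeq]
          ext a
          simp only [Finset.mem_union, Finset.mem_insert, Finset.mem_singleton]
          tauto
        have hTcard : (insert m₁ (insert m₂ ({p} : Finset V))).card = 3 := by
          rw [Finset.card_insert_of_notMem (by simp [hm12, hpm₁]),
            Finset.card_insert_of_notMem (by simp [hpm₂]), Finset.card_singleton]
        have hyp := hUC' u₁
        rw [hT] at hyp
        have h2uc : 2 ≤ pcfUc φ (insert m₁ (insert m₂ ({p} : Finset V))) := by
          rw [hTcard] at hyp
          simpa using hyp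
        have himg := three_le_image φ hTcard h2uc
        have hab : φ m₁ ≠ φ m₂ := by
          intro e
          have himage : (insert m₁ (insert m₂ ({p} : Finset V))).image φ =
              insert (φ m₁) (insert (φ m₂) {φ p}) := by
            simp [Finset.image_insert]
          rw [himage, e, Finset.insert_idem] at himg
          have := Finset.card_insert_le (φ m₂) ({φ p} : Finset (Fin 9))
          simp only [Finset.card_singleton] at this
          omega
        have himgle : ((NB u₁ \ SF).image φ).card ≤ 2 := by
          have := Finset.card_image_le (s := NB u₁ \ SF) (f := φ)
          omega
        have hqd := pcf_quad φ' u x m₁ m₂ (fun e => dxu e.symm)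
          (fun e => hm₁S (e ▸ huS)) (fun e => hm₂S (e ▸ huS))
          (fun e => hm₁S (e ▸ hxS)) (fun e => hm₂S (e ▸ hxS)) hm12
          (by rw [pout m₁ hm₁S, pout m₂ hm₂S]; exact hab)
          (Or.inr (by
            rw [px, pout m₁ hm₁S, pout m₂ hm₂S]
            exact ⟨fun e => (hFimgmem u₁ cx hcxFw himgle m₁ hm₁) e.symm,
              fun e => (hFimgmem u₁ cx hcxFw himgle m₂ hm₂) e.symm⟩))
        rw [hins, hMeq]
        exact le_trans (min_le_left _ _) hqd
      · -- case I : generic u₁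
        have nay : ¬G.Adj y u₁ := by
          intro hh
          have hb := (memNB y u₁).mpr hh
          rw [hNy] at hb
          simp only [Finset.mem_insert, Finset.mem_singleton] at hb
          rcases hb with e | e | e
          · exact du₁x e
          · exact du₁z e
          · exact hy₁u₁ e.symm
        have naz : ¬G.Adj z u₁ := by
          intro hh
          have hb := (memNB z u₁).mpr hh
          rw [hNz] at hb
          simp only [Finset.mem_insert, Finset.mem_singleton] at hb
          rcases hb with e | e | e
          · exact du₁y e
          · exact du₁u e
          · exact dz₁u₁ e.symm
        have nav : ¬G.Adj v u₁ := fun hh => tri huv huu₁ hh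
        have huM : u ∉ NB u₁ \ SF :=
          fun hmem => (Finset.mem_sdiff.mp hmem).2 ((memSF u).mpr huS)
        have hins : NB u₁ = insert u (NB u₁ \ SF) := by
          ext a
          rw [Finset.mem_insert, Finset.mem_sdiff, memNB]
          constructor
          · intro hadj
            by_cases haSF : a ∈ SF
            · left
              rw [memSF, memS] at haSF
              rcases haSF with rfl | rfl | rfl | rfl | rfl
              · exact absurd hadj.symm hax
              · exact absurd hadj.symm nay
              · exact absurd hadj.symm naz
              · rfl
              · exact absurd hadj.symm nav
            · right; exact ⟨hadj, haSF⟩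
          · rintro (rfl | ⟨hadj, -⟩)
            · exact huu₁.symm
            · exact hadj
        have hMcard : (NB u₁ \ SF).card = 3 := by
          have hc := Finset.card_insert_of_notMem huM
          rw [← hins, cNBu₁] at hc
          omega
        have hNB'eq : NB' u₁ = NB u₁ \ SF := by
          ext a
          rw [memNB', Finset.mem_sdiff, memNB]
          constructor
          · rintro ⟨hwS', haS, hne, hadj | ⟨s, hs, h1, h2⟩⟩
            · exact ⟨hadj, fun hSF => haS ((memSF a).mp hSF)⟩
            · exfalso
              rw [memS] at hs
              rcases hs with hs | hs | hs | hs | hs <;> rw [hs] at h1 h2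
              · exact hax h1.symm
              · exact nay h1.symm
              · exact naz h1.symm
              · have hb := (memNB u a).mpr h2
                rw [hNu] at hb
                simp only [Finset.mem_insert, Finset.mem_singleton] at hb
                rcases hb with rfl | rfl | rfl
                · exact haS hzS
                · exact haS hvS
                · exact hne rfl
              · exact nav h1.symm
          · rintro ⟨hadj, haSF⟩
            have haS : a ∉ Sset := fun hh => haSF ((memSF a).mpr hh)
            exact ⟨hu₁S, haS, hadj.ne, Or.inl hadj⟩
        have hyp := hUC' u₁
        rw [hNB'eq] at hyp
        have hrb : 3 ≤ ((NB u₁ \ SF).image φ).card := by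
          apply three_le_image φ hMcard
          rw [hMcard] at hyp
          simpa using hyp
        have hres := pcf_extend_one φ φ' (NB u₁ \ SF) ∅ u
          (by
            intro a ha
            rw [Finset.union_empty] at ha
            exact pout a (fun hh => (Finset.mem_sdiff.mp ha).2 ((memSF a).mpr hh)))
          (by simp) (by simp) (by omega) huM
          (by rw [Finset.union_empty]; exact hyp)
          (Or.inr hrb)
        rw [hins, Finset.card_insert_of_notMem huM]
        exact hres
    by_cases haz : G.Adj z w
    · -- w = z₁
      have hwz₁ : w = z₁ := by
        have hb := (memNB z w).mpr haz
        rw [hNz] at hb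
        simp only [Finset.mem_insert, Finset.mem_singleton] at hb
        tauto
      rw [hwz₁] at haz hwS hay hau ⊢
      by_cases hax : G.Adj x z₁
      · -- case E : w = z₁ ∈ {x₁, x₂}
        have nav : ¬G.Adj v z₁ := fun hh => hxvdisj z₁ hax hh
        have hwx12 : z₁ = x₁ ∨ z₁ = x₂ := by
          have hb := (memNB x z₁).mpr hax
          rw [hNx] at hb
          simp only [Finset.mem_insert, Finset.mem_singleton] at hb
          rcases hb with hb | hb | hb | hb
          · exact absurd hyS (by rw [← hb]; exact hwS)
          · exact absurd hvS (by rw [← hb]; exact hwS)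
          · exact Or.inl hb
          · exact Or.inr hb
        have hcxFw : cx ∉ Fimg z₁ := by
          rcases hwx12 with hb | hb
          · rw [hb]; exact cxF1
          · rw [hb]; exact cxF2
        have hxM : x ∉ NB z₁ \ SF :=
          fun hmem => (Finset.mem_sdiff.mp hmem).2 ((memSF x).mpr hxS)
        have hzM : z ∉ NB z₁ \ SF :=
          fun hmem => (Finset.mem_sdiff.mp hmem).2 ((memSF z).mpr hzS)
        have hins : NB z₁ = insert x (insert z (NB z₁ \ SF)) := by
          ext a
          rw [Finset.mem_insert, Finset.mem_insert, Finset.mem_sdiff, memNB]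
          constructor
          · intro hadj
            by_cases haSF : a ∈ SF
            · rw [memSF, memS] at haSF
              rcases haSF with rfl | rfl | rfl | rfl | rfl
              · exact Or.inl rfl
              · exact absurd hadj.symm hay
              · exact Or.inr (Or.inl rfl)
              · exact absurd hadj.symm hau
              · exact absurd hadj.symm nav
            · exact Or.inr (Or.inr ⟨hadj, haSF⟩)
          · rintro (rfl | rfl | ⟨hadj, -⟩)
            · exact hax.symm
            · exact hazz₁.symm
            · exact hadj
        have hMle : (NB z₁ \ SF).card ≤ 2 := by
          have hx2 : x ∉ insert z (NB z₁ \ SF) := by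
            rw [Finset.mem_insert]
            rintro (e | e)
            · exact dxz e
            · exact hxM e
          have hc1 := Finset.card_insert_of_notMem hx2
          have hc2 := Finset.card_insert_of_notMem hzM
          rw [← hins] at hc1
          have := cNBle z₁
          omega
        have himgle : ((NB z₁ \ SF).image φ).card ≤ 2 := by
          have := Finset.card_image_le (s := NB z₁ \ SF) (f := φ)
          omega
        have hres := pcf_extend_two φ φ' (NB z₁ \ SF) x z dxz hxM hzM
          (fun a ha => pout a (fun hh => (Finset.mem_sdiff.mp ha).2 ((memSF a).mpr hh)))
          (fun a ha => by rw [px]; exact hFimgmem z₁ cx hcxFw himgle a ha)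
          (fun a ha => by rw [pz]; exact hFimgmem z₁ cz czF himgle a ha)
          (by rw [px, pz]; exact fun e => czcx e.symm)
        rw [hins]
        exact le_trans (min_le_left _ _) hres
      · by_cases hav : G.Adj v z₁
        · -- case F : w = z₁ ∈ {v₁, v₂}
          have hwv12 : z₁ = v₁ ∨ z₁ = v₂ := by
            have hb := (memNB v z₁).mpr hav
            rw [hNv] at hb
            simp only [Finset.mem_insert, Finset.mem_singleton] at hb
            rcases hb with hb | hb | hb | hb
            · exact absurd huS (by rw [← hb]; exact hwS)
            · exact absurd hxS (by rw [← hb]; exact hwS)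
            · exact Or.inl hb
            · exact Or.inr hb
          have hcvFw : cv ∉ Fimg z₁ := by
            rcases hwv12 with hb | hb
            · rw [hb]; exact cvF1
            · rw [hb]; exact cvF2
          have hvM : v ∉ NB z₁ \ SF :=
            fun hmem => (Finset.mem_sdiff.mp hmem).2 ((memSF v).mpr hvS)
          have hzM : z ∉ NB z₁ \ SF :=
            fun hmem => (Finset.mem_sdiff.mp hmem).2 ((memSF z).mpr hzS)
          have hins : NB z₁ = insert v (insert z (NB z₁ \ SF)) := by
            ext a
            rw [Finset.mem_insert, Finset.mem_insert, Finset.mem_sdiff, memNB]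
            constructor
            · intro hadj
              by_cases haSF : a ∈ SF
              · rw [memSF, memS] at haSF
                rcases haSF with rfl | rfl | rfl | rfl | rfl
                · exact absurd hadj.symm hax
                · exact absurd hadj.symm hay
                · exact Or.inr (Or.inl rfl)
                · exact absurd hadj.symm hau
                · exact Or.inl rfl
              · exact Or.inr (Or.inr ⟨hadj, haSF⟩)
            · rintro (rfl | rfl | ⟨hadj, -⟩)
              · exact hav.symm
              · exact hazz₁.symm
              · exact hadj
          have hMle : (NB z₁ \ SF).card ≤ 2 := by
            have hv2 : v ∉ insert z (NB z₁ \ SF) := by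
              rw [Finset.mem_insert]
              rintro (e | e)
              · exact dzv e.symm
              · exact hvM e
            have hc1 := Finset.card_insert_of_notMem hv2
            have hc2 := Finset.card_insert_of_notMem hzM
            rw [← hins] at hc1
            have := cNBle z₁
            omega
          have himgle : ((NB z₁ \ SF).image φ).card ≤ 2 := by
            have := Finset.card_image_le (s := NB z₁ \ SF) (f := φ)
            omega
          have hres := pcf_extend_two φ φ' (NB z₁ \ SF) v z (fun e => dzv e.symm) hvM hzM
            (fun a ha => pout a (fun hh => (Finset.mem_sdiff.mp ha).2 ((memSF a).mpr hh)))
            (fun a ha => by rw [pv]; exact hFimgmem z₁ cv hcvFw himgle a ha)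
            (fun a ha => by rw [pz]; exact hFimgmem z₁ cz czF himgle a ha)
            (by rw [pv, pz]; exact fun e => czcv e.symm)
          rw [hins]
          exact le_trans (min_le_left _ _) hres
        · -- case D : generic z₁
          have hzM : z ∉ NB z₁ \ SF :=
            fun hmem => (Finset.mem_sdiff.mp hmem).2 ((memSF z).mpr hzS)
          have hins : NB z₁ = insert z (NB z₁ \ SF) := by
            ext a
            rw [Finset.mem_insert, Finset.mem_sdiff, memNB]
            constructor
            · intro hadj
              by_cases haSF : a ∈ SF
              · left
                rw [memSF, memS] at haSF
                rcases haSF with rfl | rfl | rfl | rfl | rfl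
                · exact absurd hadj.symm hax
                · exact absurd hadj.symm hay
                · rfl
                · exact absurd hadj.symm hau
                · exact absurd hadj.symm hav
              · right; exact ⟨hadj, haSF⟩
            · rintro (rfl | ⟨hadj, -⟩)
              · exact hazz₁.symm
              · exact hadj
          have hMle : (NB z₁ \ SF).card ≤ 3 := by
            have hc := Finset.card_insert_of_notMem hzM
            rw [← hins] at hc
            have := cNBle z₁
            omega
          have hNB'eq : NB' z₁ = NB z₁ \ SF := by
            ext a
            rw [memNB', Finset.mem_sdiff, memNB]
            constructor
            · rintro ⟨hw1, haS, hne, hadj | ⟨s, hs, h1, h2⟩⟩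
              · exact ⟨hadj, fun hSF => haS ((memSF a).mp hSF)⟩
              · exfalso
                rw [memS] at hs
                rcases hs with hs | hs | hs | hs | hs <;> rw [hs] at h1 h2
                · exact hax h1.symm
                · exact hay h1.symm
                · have hb := (memNB z a).mpr h2
                  rw [hNz] at hb
                  simp only [Finset.mem_insert, Finset.mem_singleton] at hb
                  rcases hb with rfl | rfl | rfl
                  · exact haS hyS
                  · exact haS huS
                  · exact hne rfl
                · exact hau h1.symm
                · exact hav h1.symm
            · rintro ⟨hadj, haSF⟩
              have haS : a ∉ Sset := fun hh => haSF ((memSF a).mpr hh)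
              exact ⟨hz₁S, haS, hadj.ne, Or.inl hadj⟩
          have hyp := hUC' z₁
          rw [hNB'eq] at hyp
          have hres := pcf_extend_one φ φ' (NB z₁ \ SF) ∅ z
            (by
              intro a ha
              rw [Finset.union_empty] at ha
              exact pout a (fun hh => (Finset.mem_sdiff.mp ha).2 ((memSF a).mpr hh)))
            (by simp) (by simp) hMle hzM
            (by rw [Finset.union_empty]; exact hyp)
            (by
              rcases hFimgspec z₁ cz czF with hspec | hspec
              · left; intro a ha; rw [pz]; exact hspec a ha
              · right; exact hspec)
          rw [hins, Finset.card_insert_of_notMem hzM]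
          exact hres
    by_cases hax : G.Adj x w
    · -- case G : w ∈ {x₁, x₂} with only S-neighbor x
      have nav : ¬G.Adj v w := fun hh => hxvdisj w hax hh
      have hwx12 : w = x₁ ∨ w = x₂ := by
        have hb := (memNB x w).mpr hax
        rw [hNx] at hb
        simp only [Finset.mem_insert, Finset.mem_singleton] at hb
        rcases hb with hb | hb | hb | hb
        · exact absurd hyS (by rw [← hb]; exact hwS)
        · exact absurd hvS (by rw [← hb]; exact hwS)
        · exact Or.inl hb
        · exact Or.inr hb
      obtain ⟨p, haxp, hpS, hwp, hcxFw, hother⟩ :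
          ∃ p, G.Adj x p ∧ p ∉ Sset ∧ w ≠ p ∧ cx ∉ Fimg w ∧
            (∀ a, G.Adj x a → a ∉ Sset → a ≠ w → a = p) := by
        rcases hwx12 with hb | hb
        · refine ⟨x₂, haxx₂, hx₂S, ?_, ?_, ?_⟩
          · rw [hb]; exact dx₁x₂
          · rw [hb]; exact cxF1
          · intro a ha haS hne
            have hmem := (memNB x a).mpr ha
            rw [hNx] at hmem
            simp only [Finset.mem_insert, Finset.mem_singleton] at hmem
            rcases hmem with hb2 | hb2 | hb2 | hb2
            · exact absurd hyS (by rw [← hb2]; exact haS)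
            · exact absurd hvS (by rw [← hb2]; exact haS)
            · exact absurd (hb2.trans hb.symm) hne
            · exact hb2
        · refine ⟨x₁, haxx₁, hx₁S, ?_, ?_, ?_⟩
          · rw [hb]; exact dx₁x₂.symm
          · rw [hb]; exact cxF2
          · intro a ha haS hne
            have hmem := (memNB x a).mpr ha
            rw [hNx] at hmem
            simp only [Finset.mem_insert, Finset.mem_singleton] at hmem
            rcases hmem with hb2 | hb2 | hb2 | hb2
            · exact absurd hyS (by rw [← hb2]; exact haS)
            · exact absurd hvS (by rw [← hb2]; exact haS)
            · exact hb2
            · exact absurd (hb2.trans hb.symm) hne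
      have hxM : x ∉ NB w \ SF :=
        fun hmem => (Finset.mem_sdiff.mp hmem).2 ((memSF x).mpr hxS)
      have hpM : p ∉ NB w \ SF := by
        intro hmem
        exact tri hax haxp ((memNB w p).mp (Finset.mem_sdiff.mp hmem).1)
      have hins : NB w = insert x (NB w \ SF) := by
        ext a
        rw [Finset.mem_insert, Finset.mem_sdiff, memNB]
        constructor
        · intro hadj
          by_cases haSF : a ∈ SF
          · left
            rw [memSF, memS] at haSF
            rcases haSF with rfl | rfl | rfl | rfl | rfl
            · rfl
            · exact absurd hadj.symm hay
            · exact absurd hadj.symm haz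
            · exact absurd hadj.symm hau
            · exact absurd hadj.symm nav
          · right; exact ⟨hadj, haSF⟩
        · rintro (rfl | ⟨hadj, -⟩)
          · exact hax.symm
          · exact hadj
      have hMle : (NB w \ SF).card ≤ 3 := by
        have hc := Finset.card_insert_of_notMem hxM
        rw [← hins] at hc
        have := cNBle w
        omega
      have hNB'eq : NB' w = (NB w \ SF) ∪ {p} := by
        ext a
        rw [memNB', Finset.mem_union, Finset.mem_sdiff, memNB, Finset.mem_singleton]
        constructor
        · rintro ⟨hw1, haS, hne, hadj | ⟨s, hs, h1, h2⟩⟩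
          · exact Or.inl ⟨hadj, fun hSF => haS ((memSF a).mp hSF)⟩
          · rw [memS] at hs
            rcases hs with hs | hs | hs | hs | hs <;> rw [hs] at h1 h2
            · exact Or.inr (hother a h2 haS (fun e => hne e.symm))
            · exact absurd h1.symm hay
            · exact absurd h1.symm haz
            · exact absurd h1.symm hau
            · exact absurd h1.symm nav
        · rintro (⟨hadj, haSF⟩ | rfl)
          · have haS : a ∉ Sset := fun hh => haSF ((memSF a).mpr hh)
            exact ⟨hwS, haS, hadj.ne, Or.inl hadj⟩
          · exact ⟨hwS, hpS, hwp, Or.inr ⟨x, hxS, hax.symm, haxp⟩⟩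
      have hyp := hUC' w
      rw [hNB'eq] at hyp
      have hres := pcf_extend_one φ φ' (NB w \ SF) {p} x
        (by
          intro a ha
          rw [Finset.mem_union, Finset.mem_singleton] at ha
          rcases ha with ha | rfl
          · exact pout a (fun hh => (Finset.mem_sdiff.mp ha).2 ((memSF a).mpr hh))
          · exact pout a hpS)
        (by simp) (by intro q hq; rw [Finset.mem_singleton] at hq; rw [hq]; exact hpM)
        hMle hxM hyp
        (by
          rcases hFimgspec w cx hcxFw with hspec | hspec
          · left; intro a ha; rw [px]; exact hspec a ha
          · right; exact hspec)
      rw [hins, Finset.card_insert_of_notMem hxM]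
      exact hres
    by_cases hav : G.Adj v w
    · -- case H : w ∈ {v₁, v₂} with only S-neighbor v
      have hwv12 : w = v₁ ∨ w = v₂ := by
        have hb := (memNB v w).mpr hav
        rw [hNv] at hb
        simp only [Finset.mem_insert, Finset.mem_singleton] at hb
        rcases hb with hb | hb | hb | hb
        · exact absurd huS (by rw [← hb]; exact hwS)
        · exact absurd hxS (by rw [← hb]; exact hwS)
        · exact Or.inl hb
        · exact Or.inr hb
      obtain ⟨p, havp, hpS, hwp, hcvFw, hother⟩ :
          ∃ p, G.Adj v p ∧ p ∉ Sset ∧ w ≠ p ∧ cv ∉ Fimg w ∧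
            (∀ a, G.Adj v a → a ∉ Sset → a ≠ w → a = p) := by
        rcases hwv12 with hb | hb
        · refine ⟨v₂, havv₂, hv₂S, ?_, ?_, ?_⟩
          · rw [hb]; exact dv₁v₂
          · rw [hb]; exact cvF1
          · intro a ha haS hne
            have hmem := (memNB v a).mpr ha
            rw [hNv] at hmem
            simp only [Finset.mem_insert, Finset.mem_singleton] at hmem
            rcases hmem with hb2 | hb2 | hb2 | hb2
            · exact absurd huS (by rw [← hb2]; exact haS)
            · exact absurd hxS (by rw [← hb2]; exact haS)
            · exact absurd (hb2.trans hb.symm) hne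
            · exact hb2
        · refine ⟨v₁, havv₁, hv₁S, ?_, ?_, ?_⟩
          · rw [hb]; exact dv₁v₂.symm
          · rw [hb]; exact cvF2
          · intro a ha haS hne
            have hmem := (memNB v a).mpr ha
            rw [hNv] at hmem
            simp only [Finset.mem_insert, Finset.mem_singleton] at hmem
            rcases hmem with hb2 | hb2 | hb2 | hb2
            · exact absurd huS (by rw [← hb2]; exact haS)
            · exact absurd hxS (by rw [← hb2]; exact haS)
            · exact hb2
            · exact absurd (hb2.trans hb.symm) hne
      have hvM : v ∉ NB w \ SF :=
        fun hmem => (Finset.mem_sdiff.mp hmem).2 ((memSF v).mpr hvS)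
      have hpM : p ∉ NB w \ SF := by
        intro hmem
        exact tri hav havp ((memNB w p).mp (Finset.mem_sdiff.mp hmem).1)
      have hins : NB w = insert v (NB w \ SF) := by
        ext a
        rw [Finset.mem_insert, Finset.mem_sdiff, memNB]
        constructor
        · intro hadj
          by_cases haSF : a ∈ SF
          · left
            rw [memSF, memS] at haSF
            rcases haSF with rfl | rfl | rfl | rfl | rfl
            · exact absurd hadj.symm hax
            · exact absurd hadj.symm hay
            · exact absurd hadj.symm haz
            · exact absurd hadj.symm hau
            · rfl
          · right; exact ⟨hadj, haSF⟩
        · rintro (rfl | ⟨hadj, -⟩)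
          · exact hav.symm
          · exact hadj
      have hMle : (NB w \ SF).card ≤ 3 := by
        have hc := Finset.card_insert_of_notMem hvM
        rw [← hins] at hc
        have := cNBle w
        omega
      have hNB'eq : NB' w = (NB w \ SF) ∪ {p} := by
        ext a
        rw [memNB', Finset.mem_union, Finset.mem_sdiff, memNB, Finset.mem_singleton]
        constructor
        · rintro ⟨hw1, haS, hne, hadj | ⟨s, hs, h1, h2⟩⟩
          · exact Or.inl ⟨hadj, fun hSF => haS ((memSF a).mp hSF)⟩
          · rw [memS] at hs
            rcases hs with hs | hs | hs | hs | hs <;> rw [hs] at h1 h2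
            · exact absurd h1.symm hax
            · exact absurd h1.symm hay
            · exact absurd h1.symm haz
            · exact absurd h1.symm hau
            · exact Or.inr (hother a h2 haS (fun e => hne e.symm))
        · rintro (⟨hadj, haSF⟩ | rfl)
          · have haS : a ∉ Sset := fun hh => haSF ((memSF a).mpr hh)
            exact ⟨hwS, haS, hadj.ne, Or.inl hadj⟩
          · exact ⟨hwS, hpS, hwp, Or.inr ⟨v, hvS, hav.symm, havp⟩⟩
      have hyp := hUC' w
      rw [hNB'eq] at hyp
      have hres := pcf_extend_one φ φ' (NB w \ SF) {p} v
        (by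
          intro a ha
          rw [Finset.mem_union, Finset.mem_singleton] at ha
          rcases ha with ha | rfl
          · exact pout a (fun hh => (Finset.mem_sdiff.mp ha).2 ((memSF a).mpr hh))
          · exact pout a hpS)
        (by simp) (by intro q hq; rw [Finset.mem_singleton] at hq; rw [hq]; exact hpM)
        hMle hvM hyp
        (by
          rcases hFimgspec w cv hcvFw with hspec | hspec
          · left; intro a ha; rw [pv]; exact hspec a ha
          · right; exact hspec)
      rw [hins, Finset.card_insert_of_notMem hvM]
      exact hres
    · -- far case
      have hNB'w : NB' w = NB w := by
        ext a
        rw [memNB, memNB']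
        constructor
        · rintro ⟨-, -, -, hadj | ⟨s, hs, h1, h2⟩⟩
          · exact hadj
          · exfalso
            rw [memS] at hs
            rcases hs with rfl | rfl | rfl | rfl | rfl
            · exact hax h1.symm
            · exact hay h1.symm
            · exact haz h1.symm
            · exact hau h1.symm
            · exact hav h1.symm
        · intro hadj
          refine ⟨hwS, ?_, hadj.ne, Or.inl hadj⟩
          intro haS
          rw [memS] at haS
          rcases haS with rfl | rfl | rfl | rfl | rfl
          · exact hax hadj.symm
          · exact hay hadj.symm
          · exact haz hadj.symm
          · exact hau hadj.symm
          · exact hav hadj.symm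
      have hagree : pcfUc φ' (NB w) = pcfUc φ (NB w) := by
        apply pcfUc_congr
        intro a ha
        apply pout
        intro haS
        rw [memS] at haS
        have hadj := (memNB w a).mp ha
        rcases haS with rfl | rfl | rfl | rfl | rfl
        · exact hax hadj.symm
        · exact hay hadj.symm
        · exact haz hadj.symm
        · exact hau hadj.symm
        · exact hav hadj.symm
      rw [hagree, ← hNB'w]
      exact hUC' w
  exact ⟨φ', hprop, huniq⟩
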